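/- With the notation of the ellipsoid case ($\omega_i > 0$, $\|x\|_\omega < 1$, $J_k$ as above), for every $k \geq 1$ and every $x$ in the interior of the ellipsoid, $\Delta_\xi^k J_k(x,\xi) = 0$ for all $\xi \neq 0$, where $\Delta_\xi^k$ is the $k$-th iterate of the Laplacian in $\xi$. -/

import Mathlib

/-- Scaled inner product `⟨x,y⟩_ω = ∑ i, ω_i² x_i y_i`. -/
noncomputable def wip {n : ℕ} (ω x y : Fin n → ℝ) : ℝ := ∑ i, (ω i) ^ 2 * x i * y i

/-- The Euclidean norm on `Fin n → ℝ`. -/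
noncomputable def euclidNorm {n : ℕ} (x : Fin n → ℝ) : ℝ := Real.sqrt (∑ i, (x i) ^ 2)

/-- The Laplacian `Δ f x = ∑ j, ∂²f/∂x_j² (x)` on `Fin n → ℝ`. -/
noncomputable def lap {n : ℕ} (f : (Fin n → ℝ) → ℝ) : (Fin n → ℝ) → ℝ := fun x =>
  ∑ j : Fin n, fderiv ℝ (fun y => fderiv ℝ f y (Pi.single j 1)) x (Pi.single j 1)

open MvPolynomial Finset

/-! ### Derivatives of multivariate polynomial evaluation -/

lemma hasFDerivAt_eval_mv {n : ℕ} (p : MvPolynomial (Fin n) ℝ) (y : Fin n → ℝ) :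
    HasFDerivAt (fun z => eval z p)
      (∑ i, eval y (pderiv i p) • (ContinuousLinearMap.proj i : (Fin n → ℝ) →L[ℝ] ℝ)) y := by
  induction p using MvPolynomial.induction_on with
  | C a =>
      have : HasFDerivAt (fun _ : Fin n → ℝ => a) (0 : (Fin n → ℝ) →L[ℝ] ℝ) y :=
        hasFDerivAt_const a y
      simpa [pderiv_C] using this
  | add p q hp hq =>
      have h := hp.add hq
      simp only [map_add] at h ⊢
      refine h.congr_fderiv (Eq.symm ?_)
      rw [← Finset.sum_add_distrib]
      congr 1; ext i v; simp [add_smul]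
  | mul_X p i hp =>
      have hX : HasFDerivAt (fun z : Fin n → ℝ => z i)
          (ContinuousLinearMap.proj i : (Fin n → ℝ) →L[ℝ] ℝ) y :=
        (ContinuousLinearMap.proj i : (Fin n → ℝ) →L[ℝ] ℝ).hasFDerivAt
      have h := hp.mul hX
      simp only [map_mul, eval_X] at h ⊢
      refine h.congr_fderiv (Eq.symm ?_)
      ext v
      simp only [ContinuousLinearMap.coe_sum', Finset.sum_apply, ContinuousLinearMap.smul_apply,
        ContinuousLinearMap.add_apply, ContinuousLinearMap.proj_apply, smul_eq_mul]
      classical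
      have hterm : ∀ j : Fin n, eval y (pderiv j (p * X i)) =
          eval y (pderiv j p) * y i + (if j = i then eval y p else 0) := by
        intro j
        rw [pderiv_mul]
        by_cases hji : j = i <;> simp [hji, pderiv_X_self, pderiv_X_of_ne, Ne.symm, eval_X]
      calc ∑ j, eval y (pderiv j (p * X i)) * v j
          = ∑ j, ((eval y (pderiv j p) * y i) * v j + (if j = i then eval y p else 0) * v j) := by
            refine Finset.sum_congr rfl fun j _ => ?_; rw [hterm j]; ring
        _ = y i * ∑ j, eval y (pderiv j p) * v j + eval y p * v i := by
            rw [Finset.sum_add_distrib]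
            congr 1
            · rw [Finset.mul_sum]; exact Finset.sum_congr rfl fun j _ => by ring
            · simp
        _ = _ := by
            simp [ContinuousLinearMap.add_apply, ContinuousLinearMap.smul_apply,
              ContinuousLinearMap.coe_sum', Finset.sum_apply, ContinuousLinearMap.proj_apply,
              smul_eq_mul, Finset.mul_sum]
            try ring

lemma fderiv_eval_single {n : ℕ} (p : MvPolynomial (Fin n) ℝ) (y : Fin n → ℝ) (j : Fin n) :
    fderiv ℝ (fun z => eval z p) y (Pi.single j 1) = eval y (pderiv j p) := by
  classical
  rw [(hasFDerivAt_eval_mv p y).fderiv]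
  simp only [ContinuousLinearMap.coe_sum', Finset.sum_apply, ContinuousLinearMap.smul_apply,
    ContinuousLinearMap.proj_apply, smul_eq_mul]
  rw [Finset.sum_eq_single j]
  · simp
  · intro i _ hij; exact mul_eq_zero.mpr (Or.inr (Pi.single_eq_of_ne hij 1))
  · simp

noncomputable def lapPoly {n : ℕ} (p : MvPolynomial (Fin n) ℝ) : MvPolynomial (Fin n) ℝ :=
  ∑ j, pderiv j (pderiv j p)

lemma lap_eval {n : ℕ} (p : MvPolynomial (Fin n) ℝ) :
    lap (fun z => eval z p) = fun z => eval z (lapPoly p) := by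
  funext y
  unfold lap lapPoly
  rw [map_sum]
  refine Finset.sum_congr rfl fun j _ => ?_
  have h1 : (fun z : Fin n → ℝ => fderiv ℝ (fun w => eval w p) z (Pi.single j 1)) =
      fun z => eval z (pderiv j p) := funext fun z => fderiv_eval_single p z j
  rw [h1, fderiv_eval_single]

lemma lap_iterate_eval {n : ℕ} (k : ℕ) (p : MvPolynomial (Fin n) ℝ) :
    lap^[k] (fun z => eval z p) = fun z => eval z (lapPoly^[k] p) := by
  induction k generalizing p with
  | zero => rfl
  | succ m ih =>
      rw [Function.iterate_succ_apply, Function.iterate_succ_apply, lap_eval, ih]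

/-! ### Degree drop under `pderiv` -/

lemma pderiv_support_bound {n : ℕ} (i : Fin n) (p : MvPolynomial (Fin n) ℝ) :
    ∀ s ∈ (pderiv i p).support, (s.sum fun _ e => e) + 1 ≤ p.totalDegree := by
  classical
  intro s hs
  have hrepr : pderiv i p = ∑ t ∈ p.support, monomial (t - Finsupp.single i 1) (coeff t p * t i) := by
    conv_lhs => rw [p.as_sum]
    rw [map_sum]
    exact Finset.sum_congr rfl fun t _ => pderiv_monomial
  rw [hrepr] at hs
  have := MvPolynomial.support_sum hs
  obtain ⟨t, ht, hst⟩ := Finset.mem_biUnion.mp this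
  have hsub := MvPolynomial.support_monomial_subset hst
  have hs' : s = t - Finsupp.single i 1 := Finset.mem_singleton.mp hsub
  have hcoeff : coeff t p * (t i : ℝ) ≠ 0 := by
    intro h0
    rw [hs', h0] at hst
    simp at hst
  have hti : 1 ≤ t i := by
    rcases Nat.eq_zero_or_pos (t i) with h | h
    · exact absurd (by rw [h]; simp) hcoeff
    · exact h
  have htd : (t.sum fun _ e => e) ≤ p.totalDegree := le_totalDegree ht
  have hsum_s : (s.sum fun _ e => e) = ∑ j : Fin n, s j := Finsupp.sum_fintype _ _ (fun _ => rfl)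
  have hsum_t : (t.sum fun _ e => e) = ∑ j : Fin n, t j := Finsupp.sum_fintype _ _ (fun _ => rfl)
  have hkey : (∑ j : Fin n, s j) + 1 ≤ ∑ j : Fin n, t j := by
    subst hs'
    have h1 : ∀ j : Fin n, (t - Finsupp.single i 1 : Fin n →₀ ℕ) j = t j - (if i = j then 1 else 0) := by
      intro j; rw [Finsupp.tsub_apply]; simp [Finsupp.single_apply]
    have h2 : ∀ j ∈ Finset.univ.erase i, (t - Finsupp.single i 1 : Fin n →₀ ℕ) j = t j := by
      intro j hj
      rw [h1, if_neg (Ne.symm (Finset.ne_of_mem_erase hj)), Nat.sub_zero]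
    rw [← Finset.add_sum_erase _ (fun j => (t - Finsupp.single i 1 : Fin n →₀ ℕ) j)
          (Finset.mem_univ i),
        ← Finset.add_sum_erase _ (fun j => t j) (Finset.mem_univ i),
        Finset.sum_congr rfl h2, h1 i, if_pos rfl]
    have hcan : ∑ x ∈ Finset.univ.erase i, t x = (Finset.univ.erase i).sum ⇑t := rfl
    omega
  omega

lemma totalDegree_pderiv_le' {n : ℕ} (i : Fin n) (p : MvPolynomial (Fin n) ℝ) (d : ℕ)
    (h : p.totalDegree ≤ d + 1) : (pderiv i p).totalDegree ≤ d := by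
  apply Finset.sup_le
  intro s hs
  have := pderiv_support_bound i p s hs
  omega

lemma pderiv_eq_zero_of_deg_zero {n : ℕ} (i : Fin n) (p : MvPolynomial (Fin n) ℝ)
    (h : p.totalDegree = 0) : pderiv i p = 0 := by
  by_contra hne
  obtain ⟨s, hs⟩ : (pderiv i p).support.Nonempty := Finset.nonempty_iff_ne_empty.mpr (by rwa [Ne, MvPolynomial.support_eq_empty])
  have := pderiv_support_bound i p s hs
  omega

lemma lapPoly_iterate_eq_zero {n : ℕ} :
    ∀ (k : ℕ) (p : MvPolynomial (Fin n) ℝ), p.totalDegree < 2 * k → lapPoly^[k] p = 0 := by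
  intro k
  induction k with
  | zero => intro p hp; omega
  | succ m ih =>
      intro p hp
      rw [Function.iterate_succ_apply]
      rcases le_or_gt p.totalDegree 1 with h1 | h1
      · have hz : lapPoly p = 0 := by
          unfold lapPoly
          refine Finset.sum_eq_zero fun j _ => ?_
          have : (pderiv j p).totalDegree ≤ 0 := totalDegree_pderiv_le' j p 0 h1
          rw [pderiv_eq_zero_of_deg_zero j _ (Nat.le_zero.mp this)]
        rw [hz]
        clear hp ih
        induction m with
        | zero => rfl
        | succ l ihl =>
            rw [Function.iterate_succ_apply, show lapPoly (0 : MvPolynomial (Fin n) ℝ) = 0 by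
              unfold lapPoly; simp, ihl]
      · apply ih
        have hd : (lapPoly p).totalDegree ≤ p.totalDegree - 2 := by
          unfold lapPoly
          apply totalDegree_finsetSum_le
          intro j _
          have h2 : (pderiv j p).totalDegree ≤ p.totalDegree - 1 :=
            totalDegree_pderiv_le' j p (p.totalDegree - 1) (by omega)
          exact totalDegree_pderiv_le' j _ _ (by omega)
        omega

/-! ### Locality of the iterated Laplacian -/

lemma lap_congr_on {n : ℕ} {f g : (Fin n → ℝ) → ℝ} {U : Set (Fin n → ℝ)} (hU : IsOpen U)
    (h : ∀ y ∈ U, f y = g y) : ∀ y ∈ U, lap f y = lap g y := by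
  intro y hy
  unfold lap
  refine Finset.sum_congr rfl fun j _ => ?_
  have hfg : ∀ z ∈ U, fderiv ℝ f z (Pi.single j 1) = fderiv ℝ g z (Pi.single j 1) := by
    intro z hz
    have : f =ᶠ[nhds z] g := Filter.eventuallyEq_of_mem (hU.mem_nhds hz) h
    rw [this.fderiv_eq]
  have : (fun z => fderiv ℝ f z (Pi.single j 1)) =ᶠ[nhds y]
      (fun z => fderiv ℝ g z (Pi.single j 1)) :=
    Filter.eventuallyEq_of_mem (hU.mem_nhds hy) hfg
  rw [this.fderiv_eq]

lemma lap_iterate_congr_on {n : ℕ} {U : Set (Fin n → ℝ)} (hU : IsOpen U) (k : ℕ)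
    {f g : (Fin n → ℝ) → ℝ} (h : ∀ y ∈ U, f y = g y) :
    ∀ y ∈ U, lap^[k] f y = lap^[k] g y := by
  induction k generalizing f g with
  | zero => exact h
  | succ m ih =>
      intro y hy
      rw [Function.iterate_succ_apply, Function.iterate_succ_apply]
      exact ih (lap_congr_on hU h) y hy

/-! ### The explicit polynomial -/

lemma sqrt_binom_sum (k : ℕ) (b d : ℝ) (hd : 0 ≤ d) :
    (b + Real.sqrt d) ^ k + (b - Real.sqrt d) ^ k =
      ∑ j ∈ Finset.range (k + 1),
        if Even (k - j) then 2 * (k.choose j : ℝ) * b ^ j * d ^ ((k - j) / 2) else 0 := by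
  have h2 : (b - Real.sqrt d) ^ k =
      ∑ j ∈ Finset.range (k + 1), b ^ j * (-Real.sqrt d) ^ (k - j) * (k.choose j : ℝ) := by
    rw [sub_eq_add_neg, add_pow]
  rw [add_pow, h2, ← Finset.sum_add_distrib]
  refine Finset.sum_congr rfl fun j hj => ?_
  by_cases he : Even (k - j)
  · rw [if_pos he]
    obtain ⟨m, hm⟩ := he
    have hsq : (Real.sqrt d) ^ (k - j) = d ^ ((k - j) / 2) := by
      rw [hm, ← two_mul, pow_mul, Real.sq_sqrt hd]
      congr 1
      omega
    have hneg : (-Real.sqrt d) ^ (k - j) = (Real.sqrt d) ^ (k - j) :=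
      Even.neg_pow ⟨m, hm⟩ _
    rw [hneg, hsq]; ring
  · rw [if_neg he]
    have : (-Real.sqrt d) ^ (k - j) = -(Real.sqrt d) ^ (k - j) :=
      Odd.neg_pow (Nat.not_even_iff_odd.mp he) _
    rw [this]; ring

noncomputable def Bp {n : ℕ} (ω x : Fin n → ℝ) : MvPolynomial (Fin n) ℝ :=
  ∑ i, MvPolynomial.C ((ω i) ^ 2 * x i) * X i

noncomputable def Ap {n : ℕ} (ω : Fin n → ℝ) : MvPolynomial (Fin n) ℝ :=
  ∑ i, MvPolynomial.C ((ω i) ^ 2) * X i * X i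

noncomputable def Dp {n : ℕ} (ω x : Fin n → ℝ) : MvPolynomial (Fin n) ℝ :=
  (Bp ω x) ^ 2 + MvPolynomial.C (1 - wip ω x x) * Ap ω

noncomputable def Pp {n : ℕ} (ω x : Fin n → ℝ) (k : ℕ) : MvPolynomial (Fin n) ℝ :=
  MvPolynomial.C (((1 - wip ω x x) ^ k)⁻¹) *
    ∑ j ∈ Finset.range (k + 1),
      if Even (k - j) then
        MvPolynomial.C (2 * (k.choose j) : ℝ) * (Bp ω x) ^ j * (Dp ω x) ^ ((k - j) / 2)
      else 0

lemma eval_Bp {n : ℕ} (ω x ξ : Fin n → ℝ) : eval ξ (Bp ω x) = wip ω x ξ := by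
  simp [Bp, wip, eval_sum]

lemma eval_Ap {n : ℕ} (ω ξ : Fin n → ℝ) : eval ξ (Ap ω) = wip ω ξ ξ := by
  simp [Ap, wip, eval_sum, mul_assoc]

lemma eval_Dp {n : ℕ} (ω x ξ : Fin n → ℝ) :
    eval ξ (Dp ω x) = (wip ω x ξ) ^ 2 + (1 - wip ω x x) * wip ω ξ ξ := by
  simp [Dp, eval_Bp, eval_Ap]

lemma eval_Pp {n : ℕ} (ω x ξ : Fin n → ℝ) (k : ℕ) :
    eval ξ (Pp ω x k) = ((1 - wip ω x x) ^ k)⁻¹ *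
      ∑ j ∈ Finset.range (k + 1),
        if Even (k - j) then
          2 * (k.choose j : ℝ) * (wip ω x ξ) ^ j *
            ((wip ω x ξ) ^ 2 + (1 - wip ω x x) * wip ω ξ ξ) ^ ((k - j) / 2)
        else 0 := by
  unfold Pp
  rw [map_mul, eval_C, map_sum]
  congr 1
  refine Finset.sum_congr rfl fun j hj => ?_
  rw [apply_ite (eval ξ)]
  simp [eval_Bp, eval_Dp]

lemma totalDegree_Pp_le {n : ℕ} (ω x : Fin n → ℝ) (k : ℕ) :
    (Pp ω x k).totalDegree ≤ k := by
  have hB : (Bp ω x).totalDegree ≤ 1 := by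
    apply totalDegree_finsetSum_le
    intro i _
    calc (MvPolynomial.C ((ω i) ^ 2 * x i) * X i).totalDegree
        ≤ (MvPolynomial.C ((ω i) ^ 2 * x i)).totalDegree + (X i : MvPolynomial (Fin n) ℝ).totalDegree :=
          totalDegree_mul _ _
      _ ≤ 1 := by rw [totalDegree_C, totalDegree_X]
  have hA : (Ap ω).totalDegree ≤ 2 := by
    apply totalDegree_finsetSum_le
    intro i _
    have h1 := totalDegree_mul (MvPolynomial.C ((ω i) ^ 2) * X i) (X i : MvPolynomial (Fin n) ℝ)
    have h0 := totalDegree_mul (MvPolynomial.C ((ω i) ^ 2)) (X i : MvPolynomial (Fin n) ℝ)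
    rw [totalDegree_C, totalDegree_X] at h0
    rw [totalDegree_X] at h1
    omega
  have hD : (Dp ω x).totalDegree ≤ 2 := by
    unfold Dp
    refine (totalDegree_add _ _).trans (max_le ?_ ?_)
    · refine (totalDegree_pow (Bp ω x) 2).trans ?_
      calc 2 * (Bp ω x).totalDegree ≤ 2 * 1 := Nat.mul_le_mul_left 2 hB
        _ = 2 := rfl
    · refine (totalDegree_mul _ _).trans ?_
      rw [totalDegree_C]
      omega
  unfold Pp
  refine (totalDegree_mul _ _).trans ?_
  rw [totalDegree_C, zero_add]
  apply totalDegree_finsetSum_le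
  intro j hj
  have hjk : j ≤ k := by
    have := Finset.mem_range.mp hj; omega
  by_cases he : Even (k - j)
  · rw [if_pos he]
    obtain ⟨m, hm⟩ := he
    refine (totalDegree_mul _ _).trans ?_
    have h1 : (MvPolynomial.C (2 * (k.choose j) : ℝ) * (Bp ω x) ^ j).totalDegree ≤ j := by
      refine (totalDegree_mul _ _).trans ?_
      rw [totalDegree_C, zero_add]
      refine (totalDegree_pow (Bp ω x) j).trans ?_
      calc j * (Bp ω x).totalDegree ≤ j * 1 := Nat.mul_le_mul_left j hB
        _ = j := by omega
    have h2 : ((Dp ω x) ^ ((k - j) / 2)).totalDegree ≤ ((k - j) / 2) * 2 :=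
      (totalDegree_pow _ _).trans (Nat.mul_le_mul_left _ hD)
    have h3 : ((k - j) / 2) * 2 ≤ k - j := Nat.div_mul_le_self _ _
    omega
  · rw [if_neg he]
    simp

/-! ### Analytic helper lemmas -/

lemma wip_expand {n : ℕ} (ω x ξ : Fin n → ℝ) (t : ℝ) :
    wip ω (x + t • ξ) (x + t • ξ) = wip ω x x + 2 * t * wip ω x ξ + t ^ 2 * wip ω ξ ξ := by
  unfold wip
  rw [Finset.mul_sum, Finset.mul_sum, ← Finset.sum_add_distrib, ← Finset.sum_add_distrib]
  refine Finset.sum_congr rfl fun i _ => ?_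
  simp only [Pi.add_apply, Pi.smul_apply, smul_eq_mul]
  ring

lemma wip_pos {n : ℕ} (ω ξ : Fin n → ℝ) (hω : ∀ i, 0 < ω i) (hξ : ξ ≠ 0) :
    0 < wip ω ξ ξ := by
  obtain ⟨i0, hi0⟩ := Function.ne_iff.mp hξ
  unfold wip
  refine Finset.sum_pos' (fun i _ => ?_) ⟨i0, Finset.mem_univ i0, ?_⟩
  · have : (ω i) ^ 2 * ξ i * ξ i = (ω i) ^ 2 * (ξ i) ^ 2 := by ring
    rw [this]; positivity
  · have : (ω i0) ^ 2 * ξ i0 * ξ i0 = (ω i0) ^ 2 * (ξ i0) ^ 2 := by ring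
    rw [this]
    have hi0' : ξ i0 ≠ 0 := hi0
    have h1 : (0:ℝ) < (ω i0) ^ 2 := pow_pos (hω i0) 2
    have h2 : (0:ℝ) < (ξ i0) ^ 2 := (sq_nonneg _).lt_of_ne (Ne.symm (pow_ne_zero 2 hi0'))
    exact mul_pos h1 h2

lemma euclidNorm_pos {n : ℕ} (ξ : Fin n → ℝ) (hξ : ξ ≠ 0) : 0 < euclidNorm ξ := by
  obtain ⟨i0, hi0⟩ := Function.ne_iff.mp hξ
  unfold euclidNorm
  apply Real.sqrt_pos.mpr
  have hi0' : ξ i0 ≠ 0 := hi0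
  exact Finset.sum_pos' (fun i _ => sq_nonneg _)
    ⟨i0, Finset.mem_univ i0, (sq_nonneg _).lt_of_ne (Ne.symm (pow_ne_zero 2 hi0'))⟩

lemma enorm_sub_line {n : ℕ} (x ξ : Fin n → ℝ) (t : ℝ) :
    euclidNorm (x - (x + t • ξ)) = |t| * euclidNorm ξ := by
  unfold euclidNorm
  have h : ∀ i : Fin n, ((x - (x + t • ξ)) i) ^ 2 = t ^ 2 * (ξ i) ^ 2 := by
    intro i
    simp only [Pi.sub_apply, Pi.add_apply, Pi.smul_apply, smul_eq_mul]
    ring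
  rw [Finset.sum_congr rfl (fun i _ => h i), ← Finset.mul_sum,
    Real.sqrt_mul (sq_nonneg t), Real.sqrt_sq_eq_abs]

theorem stmt7 {n : ℕ} (ω x : Fin n → ℝ) (hω : ∀ i, 0 < ω i) (hx : wip ω x x < 1)
    (k : ℕ) (hk : 1 ≤ k) (zp zm : (Fin n → ℝ) → (Fin n → ℝ))
    (hzp : ∀ ξ : Fin n → ℝ, ξ ≠ 0 →
      (∃ t > (0:ℝ), zp ξ = x + t • ξ) ∧ wip ω (zp ξ) (zp ξ) = 1)
    (hzm : ∀ ξ : Fin n → ℝ, ξ ≠ 0 →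
      (∃ t < (0:ℝ), zm ξ = x + t • ξ) ∧ wip ω (zm ξ) (zm ξ) = 1)
    (J : (Fin n → ℝ) → ℝ)
    (hJ : ∀ ξ : Fin n → ℝ, ξ ≠ 0 →
      J ξ = euclidNorm ξ ^ k / euclidNorm (x - zp ξ) ^ k +
        (-1 : ℝ) ^ k * (euclidNorm ξ ^ k / euclidNorm (x - zm ξ) ^ k)) :
    ∀ ξ : Fin n → ℝ, ξ ≠ 0 → lap^[k] J ξ = 0 := by
  have hagree : ∀ ζ : Fin n → ℝ, ζ ≠ 0 → J ζ = eval ζ (Pp ω x k) := by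
    intro ζ hζ
    obtain ⟨⟨t, ht, hzpe⟩, hq1⟩ := hzp ζ hζ
    obtain ⟨⟨t', ht', hzme⟩, hq2⟩ := hzm ζ hζ
    set c := wip ω x x with hc
    set b := wip ω x ζ with hb
    set a := wip ω ζ ζ with ha
    have hA : 0 < a := wip_pos ω ζ hω hζ
    have h1c : 0 < 1 - c := by linarith
    set d := b ^ 2 + (1 - c) * a with hd
    have hdpos : 0 < d := by have := mul_pos h1c hA; nlinarith [sq_nonneg b]
    set r := Real.sqrt d with hr
    have hr2 : r ^ 2 = d := Real.sq_sqrt hdpos.le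
    have hrpos : 0 < r := Real.sqrt_pos.mpr hdpos
    have habs : b ^ 2 < r ^ 2 := by rw [hr2]; have := mul_pos h1c hA; linarith
    have hbr1 : b < r := by nlinarith
    have hbr2 : -r < b := by nlinarith
    have hquad : a * t ^ 2 + 2 * b * t + (c - 1) = 0 := by
      have h := hq1
      rw [hzpe, wip_expand] at h
      linear_combination h
    have hquad' : a * t' ^ 2 + 2 * b * t' + (c - 1) = 0 := by
      have h := hq2
      rw [hzme, wip_expand] at h
      linear_combination h
    have hsq : (a * t + b) ^ 2 = r ^ 2 := by linear_combination a * hquad - hr2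
    have hfac : (a * t + b - r) * (a * t + b + r) = 0 := by linear_combination hsq
    have hposf : 0 < a * t + b + r := by have := mul_pos hA ht; linarith
    have hts : a * t = r - b := by
      rcases mul_eq_zero.mp hfac with h | h
      · linarith
      · linarith
    have hsq' : (a * t' + b) ^ 2 = r ^ 2 := by linear_combination a * hquad' - hr2
    have hfac' : (a * t' + b - r) * (a * t' + b + r) = 0 := by linear_combination hsq'
    have hat' : a * t' < 0 := mul_neg_of_pos_of_neg hA ht'
    have hnegf : a * t' + b - r < 0 := by linarith
    have hts' : a * t' = -(r + b) := by
      rcases mul_eq_zero.mp hfac' with h | h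
      · exact absurd h (ne_of_lt hnegf)
      · linarith
    have htne : t ≠ 0 := ne_of_gt ht
    have ht'ne : t' ≠ 0 := ne_of_lt ht'
    have htbr : t * (b + r) = 1 - c := by
      have key : a * (t * (b + r)) = a * (1 - c) := by linear_combination (b + r) * hts + hr2
      exact mul_left_cancel₀ (ne_of_gt hA) key
    have htbr' : t' * (b - r) = 1 - c := by
      have key : a * (t' * (b - r)) = a * (1 - c) := by linear_combination (b - r) * hts' + hr2
      exact mul_left_cancel₀ (ne_of_gt hA) key
    have henorm : 0 < euclidNorm ζ := euclidNorm_pos ζ hζ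
    have hnp : euclidNorm (x - zp ζ) = t * euclidNorm ζ := by
      rw [hzpe, enorm_sub_line, abs_of_pos ht]
    have hnm : euclidNorm (x - zm ζ) = (-t') * euclidNorm ζ := by
      rw [hzme, enorm_sub_line, abs_of_neg ht']
    have hterm1 : euclidNorm ζ ^ k / euclidNorm (x - zp ζ) ^ k = (1 / t) ^ k := by
      rw [hnp, mul_pow, div_mul_eq_div_div_swap, div_self (pow_ne_zero k (ne_of_gt henorm)),
        div_pow, one_pow]
    have hterm2 : (-1:ℝ) ^ k * (euclidNorm ζ ^ k / euclidNorm (x - zm ζ) ^ k) = (1 / t') ^ k := by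
      rw [hnm, mul_pow, div_mul_eq_div_div_swap, div_self (pow_ne_zero k (ne_of_gt henorm)),
        mul_one_div, ← div_pow, neg_div_neg_eq]
    have hinv : 1 / t = (b + r) / (1 - c) := by
      rw [div_eq_div_iff htne (ne_of_gt h1c)]
      linear_combination -htbr
    have hinv' : 1 / t' = (b - r) / (1 - c) := by
      rw [div_eq_div_iff ht'ne (ne_of_gt h1c)]
      linear_combination -htbr'
    have hS : (b + r) ^ k + (b - r) ^ k =
        ∑ j ∈ Finset.range (k + 1),
          if Even (k - j) then 2 * (k.choose j : ℝ) * b ^ j * d ^ ((k - j) / 2) else 0 := by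
      rw [hr]
      exact sqrt_binom_sum k b d hdpos.le
    rw [hJ ζ hζ, hterm1, hterm2, hinv, hinv', eval_Pp, ← hb, ← ha, ← hc, ← hd, ← hS,
      div_pow, div_pow, ← add_div, div_eq_inv_mul]
  intro ξ hξ
  have hU : IsOpen {z : Fin n → ℝ | z ≠ 0} := isOpen_ne
  have h1 : lap^[k] J ξ = lap^[k] (fun z => eval z (Pp ω x k)) ξ :=
    lap_iterate_congr_on hU k (fun y hy => hagree y hy) ξ hξ
  rw [h1, congrFun (lap_iterate_eval k (Pp ω x k)) ξ,
    lapPoly_iterate_eq_zero k _ (lt_of_le_of_lt (totalDegree_Pp_le ω x k) (by omega))]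
  simp
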